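/- Gauss's summation theorem: if c - a - b > 0 and c is not a nonpositive integer, then ₂F₁(a,b;c;1) = Γ(c)Γ(c-a-b)/(Γ(c-a)Γ(c-b)). -/

import Mathlib

open Real

/-- Pochhammer symbol (rising factorial) for real argument. -/
noncomputable def poch (a : ℝ) (n : ℕ) : ℝ := ∏ i ∈ Finset.range n, (a + i)

/-- The Gauss hypergeometric function ₂F₁ as a series. -/
noncomputable def twoF1 (a b c z : ℝ) : ℝ :=
  ∑' n : ℕ, poch a n * poch b n / poch c n * z ^ n / n.factorial

open Filter Topology

noncomputable def Aux (a b c : ℝ) (n : ℕ) : ℝ :=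
  poch a n * poch b n / poch c n / n.factorial

lemma poch_zero (x : ℝ) : poch x 0 = 1 := by simp [poch]

lemma poch_succ (x : ℝ) (n : ℕ) : poch x (n + 1) = poch x n * (x + n) :=
  Finset.prod_range_succ _ _

lemma poch_ne_zero {x : ℝ} (hx : ∀ i : ℕ, x + i ≠ 0) (n : ℕ) : poch x n ≠ 0 :=
  Finset.prod_ne_zero_iff.2 fun i _ => hx i

lemma poch_pos {x : ℝ} (hx : 0 < x) (n : ℕ) : 0 < poch x n :=
  Finset.prod_pos fun i _ => by positivity

lemma poch_eq_zero {x : ℝ} {m n : ℕ} (hx : x = -(m : ℝ)) (hn : m < n) : poch x n = 0 :=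
  Finset.prod_eq_zero (Finset.mem_range.2 hn) (by rw [hx]; ring)

lemma gammaSeq_eq (x : ℝ) (n : ℕ) :
    Real.GammaSeq x n = (n : ℝ) ^ x * n.factorial / poch x (n + 1) := rfl

lemma poch_eq_gammaSeq {x : ℝ} (hx : ∀ i : ℕ, x + i ≠ 0) {n : ℕ} (hn : 1 ≤ n) :
    poch x (n + 1) = (n : ℝ) ^ x * n.factorial / Real.GammaSeq x n := by
  have hp : poch x (n + 1) ≠ 0 := poch_ne_zero hx _
  have hN : (n : ℝ) ^ x * n.factorial ≠ 0 := by
    have : (0:ℝ) < (n : ℝ) ^ x := rpow_pos_of_pos (by exact_mod_cast hn) x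
    positivity
  rw [gammaSeq_eq]
  field_simp

lemma gammaSeq_ne_zero {x : ℝ} (hx : ∀ i : ℕ, x + i ≠ 0) {n : ℕ} (hn : 1 ≤ n) :
    Real.GammaSeq x n ≠ 0 := by
  have hp : poch x (n + 1) ≠ 0 := poch_ne_zero hx _
  have hN : (n : ℝ) ^ x * n.factorial ≠ 0 := by
    have : (0:ℝ) < (n : ℝ) ^ x := rpow_pos_of_pos (by exact_mod_cast hn) x
    positivity
  rw [gammaSeq_eq]
  exact div_ne_zero hN hp

lemma aux_eq_gammaSeq {a b c : ℝ} (ha : ∀ i : ℕ, a + i ≠ 0) (hb : ∀ i : ℕ, b + i ≠ 0)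
    (hc : ∀ i : ℕ, c + i ≠ 0) {n : ℕ} (hn : 1 ≤ n) :
    Aux a b c (n + 1) * ((n + 1) * (n : ℝ) ^ (c - a - b)) =
      Real.GammaSeq c n / (Real.GammaSeq a n * Real.GammaSeq b n) := by
  have hn0 : (0:ℝ) < n := by exact_mod_cast hn
  have hGa := gammaSeq_ne_zero ha hn
  have hGb := gammaSeq_ne_zero hb hn
  have hGc := gammaSeq_ne_zero hc hn
  have hf : (n.factorial : ℝ) ≠ 0 := by positivity
  have hn1 : ((n:ℝ) + 1) ≠ 0 := by positivity
  have key : (n:ℝ)^a * (n:ℝ)^b * (n:ℝ)^(c-a-b) = (n:ℝ)^c := by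
    rw [← rpow_add hn0, ← rpow_add hn0]; ring_nf
  have hra : (0:ℝ) < (n:ℝ)^a := rpow_pos_of_pos hn0 a
  have hrb : (0:ℝ) < (n:ℝ)^b := rpow_pos_of_pos hn0 b
  have hrc : (0:ℝ) < (n:ℝ)^c := rpow_pos_of_pos hn0 c
  rw [Aux, poch_eq_gammaSeq ha hn, poch_eq_gammaSeq hb hn, poch_eq_gammaSeq hc hn,
    Nat.factorial_succ]
  push_cast
  field_simp
  linear_combination key

lemma not_nonpos_int {x : ℝ} (hx : ¬ ∃ m : ℕ, x = -(m : ℝ)) : ∀ i : ℕ, x + i ≠ 0 := by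
  intro i hi
  exact hx ⟨i, by linarith⟩

lemma aux_key (a b c : ℝ) (hc : ∀ i : ℕ, c + i ≠ 0) :
    ∃ L : ℝ, Tendsto (fun n : ℕ => Aux a b c (n + 1) * ((n + 1) * (n : ℝ) ^ (c - a - b)))
      atTop (𝓝 L) := by
  by_cases ha : ∃ m : ℕ, a = -(m : ℝ)
  · obtain ⟨m, hm⟩ := ha
    refine ⟨0, Tendsto.congr' ?_ tendsto_const_nhds⟩
    filter_upwards [eventually_ge_atTop m] with n hn
    simp [Aux, poch_eq_zero hm (by omega : m < n + 1)]
  by_cases hb : ∃ m : ℕ, b = -(m : ℝ)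
  · obtain ⟨m, hm⟩ := hb
    refine ⟨0, Tendsto.congr' ?_ tendsto_const_nhds⟩
    filter_upwards [eventually_ge_atTop m] with n hn
    simp [Aux, poch_eq_zero hm (by omega : m < n + 1)]
  · have ha' := not_nonpos_int ha
    have hb' := not_nonpos_int hb
    have hΓa : Real.Gamma a ≠ 0 := by rw [Ne, Real.Gamma_eq_zero_iff]; exact ha
    have hΓb : Real.Gamma b ≠ 0 := by rw [Ne, Real.Gamma_eq_zero_iff]; exact hb
    refine ⟨Real.Gamma c / (Real.Gamma a * Real.Gamma b), Tendsto.congr' ?_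
      ((Real.GammaSeq_tendsto_Gamma c).div
        ((Real.GammaSeq_tendsto_Gamma a).mul (Real.GammaSeq_tendsto_Gamma b))
        (mul_ne_zero hΓa hΓb))⟩
    filter_upwards [eventually_ge_atTop 1] with n hn
    exact (aux_eq_gammaSeq ha' hb' hc hn).symm

lemma aux_mul_tendsto_zero {a b c : ℝ} (hc : ∀ i : ℕ, c + i ≠ 0) (h : 0 < c - a - b) :
    Tendsto (fun n : ℕ => Aux a b c n * n) atTop (𝓝 0) := by
  obtain ⟨L, hL⟩ := aux_key a b c hc
  have h2 : Tendsto (fun n : ℕ => (n : ℝ) ^ (-(c - a - b))) atTop (𝓝 0) :=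
    (tendsto_rpow_neg_atTop h).comp tendsto_natCast_atTop_atTop
  have h3 := hL.mul h2
  rw [mul_zero] at h3
  rw [← tendsto_add_atTop_iff_nat 1]
  refine Tendsto.congr' ?_ h3
  filter_upwards [eventually_ge_atTop 1] with n hn
  have hn0 : (0:ℝ) < n := by exact_mod_cast hn
  have : (n : ℝ) ^ (c - a - b) * (n : ℝ) ^ (-(c - a - b)) = 1 := by
    rw [← rpow_add hn0]; simp
  push_cast
  calc Aux a b c (n + 1) * (((n:ℝ) + 1) * (n : ℝ) ^ (c - a - b)) * (n : ℝ) ^ (-(c - a - b))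
      = Aux a b c (n + 1) * ((n:ℝ) + 1) *
        ((n : ℝ) ^ (c - a - b) * (n : ℝ) ^ (-(c - a - b))) := by ring
    _ = Aux a b c (n + 1) * ((n:ℝ) + 1) := by rw [this, mul_one]

lemma aux_summable {a b c : ℝ} (hc : ∀ i : ℕ, c + i ≠ 0) (h : 0 < c - a - b) :
    Summable (Aux a b c) := by
  obtain ⟨L, hL⟩ := aux_key a b c hc
  rw [← summable_nat_add_iff 1]
  have hmaj : Summable (fun n : ℕ => (|L| + 1) * (1 / (n : ℝ) ^ (1 + (c - a - b)))) :=
    (Real.summable_one_div_nat_rpow.2 (by linarith)).mul_left _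
  refine Summable.of_norm_bounded_eventually hmaj ?_
  rw [Nat.cofinite_eq_atTop]
  have habs : Tendsto (fun n : ℕ => |Aux a b c (n + 1) * ((n + 1) * (n : ℝ) ^ (c - a - b))|)
      atTop (𝓝 |L|) := hL.abs
  filter_upwards [eventually_ge_atTop 1,
    habs.eventually_le_const (lt_add_one |L|)] with n hn hle
  have hn0 : (0:ℝ) < n := by exact_mod_cast hn
  have hr : (0:ℝ) < (n : ℝ) ^ (c - a - b) := rpow_pos_of_pos hn0 _
  have hfac : (n : ℝ) ^ (1 + (c - a - b)) ≤ ((n:ℝ) + 1) * (n : ℝ) ^ (c - a - b) := by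
    rw [rpow_add hn0, rpow_one]
    nlinarith
  have hpos : (0:ℝ) < (n : ℝ) ^ (1 + (c - a - b)) := rpow_pos_of_pos hn0 _
  have h1 : |Aux a b c (n + 1)| * ((n:ℝ) + 1) * (n : ℝ) ^ (c - a - b) ≤ |L| + 1 := by
    have := hle
    rw [abs_mul] at this
    rw [abs_of_pos (by positivity : (0:ℝ) < ((n:ℝ)+1) * (n : ℝ) ^ (c - a - b))] at this
    push_cast at this ⊢
    nlinarith [abs_nonneg (Aux a b c (n+1))]
  rw [Real.norm_eq_abs, mul_one_div, le_div_iff₀ hpos]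
  calc |Aux a b c (n + 1)| * (n:ℝ) ^ (1 + (c - a - b))
      ≤ |Aux a b c (n + 1)| * (((n:ℝ) + 1) * (n : ℝ) ^ (c - a - b)) := by
        exact mul_le_mul_of_nonneg_left hfac (abs_nonneg _)
    _ ≤ |L| + 1 := by nlinarith [abs_nonneg (Aux a b c (n+1))]

lemma poch_shift (c : ℝ) (n : ℕ) : c * poch (c + 1) n = poch c n * (c + n) := by
  induction n with
  | zero => simp [poch]
  | succ n ih =>
    rw [poch_succ, poch_succ]
    push_cast
    linear_combination (c + 1 + (n:ℝ)) * ih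

lemma shift_hc {c : ℝ} (hc : ∀ i : ℕ, c + i ≠ 0) : ∀ i : ℕ, (c + 1) + i ≠ 0 := by
  intro i
  have := hc (i + 1)
  push_cast at this
  intro hh; apply this; linarith

lemma tele {a b c : ℝ} (hc : ∀ i : ℕ, c + i ≠ 0) (n : ℕ) :
    c * (c - a - b) * Aux a b c n - (c - a) * (c - b) * Aux a b (c + 1) n =
      c * n * Aux a b c n - c * (n + 1) * Aux a b c (n + 1) := by
  have hR : poch c n ≠ 0 := poch_ne_zero hc n
  have hR1 : poch (c + 1) n ≠ 0 := poch_ne_zero (shift_hc hc) n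
  have hcn : c + (n : ℝ) ≠ 0 := hc n
  have hc0 : c ≠ 0 := by have := hc 0; simpa using this
  have hf : (n.factorial : ℝ) ≠ 0 := by positivity
  have hf1 : ((n + 1).factorial : ℝ) ≠ 0 := by positivity
  have hshift : poch (c + 1) n = poch c n * (c + n) / c := by
    rw [eq_div_iff hc0]
    linear_combination poch_shift c n
  simp only [Aux, poch_succ a n, poch_succ b n, poch_succ c n, Nat.factorial_succ, hshift]
  push_cast
  field_simp
  ring

lemma rec_rel {a b c : ℝ} (hc : ∀ i : ℕ, c + i ≠ 0) (h : 0 < c - a - b) :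
    c * (c - a - b) * ∑' n, Aux a b c n = (c - a) * (c - b) * ∑' n, Aux a b (c + 1) n := by
  have hs1 : Summable (Aux a b c) := aux_summable hc h
  have hs2 : Summable (Aux a b (c + 1)) := aux_summable (shift_hc hc) (by linarith)
  have hsf : Summable (fun n => c * (c - a - b) * Aux a b c n -
      (c - a) * (c - b) * Aux a b (c + 1) n) := (hs1.mul_left _).sub (hs2.mul_left _)
  have hw : Tendsto (fun N : ℕ => c * 0 * Aux a b c 0 - c * N * Aux a b c N) atTop (𝓝 0) := by
    have h1 : Tendsto (fun N : ℕ => c * N * Aux a b c N) atTop (𝓝 0) := by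
      have := (aux_mul_tendsto_zero hc h).const_mul c
      rw [mul_zero] at this
      refine this.congr fun n => by ring
    have := h1.const_sub (c * 0 * Aux a b c 0)
    simpa using this
  have hpart : ∀ N : ℕ, ∑ n ∈ Finset.range N, (c * (c - a - b) * Aux a b c n -
      (c - a) * (c - b) * Aux a b (c + 1) n) = c * 0 * Aux a b c 0 - c * N * Aux a b c N := by
    intro N
    rw [Finset.sum_congr rfl fun n _ => tele hc n]
    have := Finset.sum_range_sub' (fun n => c * n * Aux a b c n) N
    push_cast at this ⊢
    exact this
  have h0 : (∑' n, (c * (c - a - b) * Aux a b c n -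
      (c - a) * (c - b) * Aux a b (c + 1) n)) = 0 := by
    refine tendsto_nhds_unique hsf.hasSum.tendsto_sum_nat ?_
    refine Tendsto.congr (fun N => (hpart N).symm) hw
  rw [Summable.tsum_sub (hs1.mul_left _) (hs2.mul_left _), tsum_mul_left, tsum_mul_left] at h0
  linarith

lemma iter {a b c : ℝ} (hc : ∀ i : ℕ, c + i ≠ 0) (h : 0 < c - a - b) (m : ℕ) :
    poch c m * poch (c - a - b) m * ∑' n, Aux a b c n =
      poch (c - a) m * poch (c - b) m * ∑' n, Aux a b (c + m) n := by
  induction m with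
  | zero => simp [poch]
  | succ m ih =>
    have hcm : ∀ i : ℕ, (c + m) + i ≠ 0 := by
      intro i
      have := hc (m + i)
      push_cast at this ⊢
      intro hh; exact this (by linarith)
    have hrec := rec_rel hcm (by linarith : (0:ℝ) < (c + m) - a - b)
    have hcast : c + ((m:ℕ) + 1 : ℕ) = (c + (m:ℕ)) + 1 := by push_cast; ring
    rw [hcast, poch_succ, poch_succ, poch_succ, poch_succ]
    push_cast
    linear_combination ((c + (m:ℝ)) * ((c + (m:ℝ)) - a - b)) * ih +
      (poch (c - a) m * poch (c - b) m) * hrec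

lemma poch_nonneg {x : ℝ} (hx : 0 ≤ x) (n : ℕ) : 0 ≤ poch x n :=
  Finset.prod_nonneg fun i _ => by positivity

lemma poch_abs_le (x : ℝ) (n : ℕ) : |poch x n| ≤ poch |x| n := by
  rw [poch, poch, Finset.abs_prod]
  refine Finset.prod_le_prod (fun i _ => abs_nonneg _) fun i _ => ?_
  calc |x + (i:ℝ)| ≤ |x| + |(i:ℝ)| := abs_add_le _ _
    _ = |x| + i := by rw [Nat.abs_cast]

lemma poch_mono_mul {c0 c' : ℝ} (h0 : 0 < c0) (hle : c0 ≤ c') (n : ℕ) :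
    c' * poch c0 (n + 1) ≤ c0 * poch c' (n + 1) := by
  induction n with
  | zero => simp [poch_succ, poch]; nlinarith
  | succ n ih =>
    rw [poch_succ c0 (n+1), poch_succ c' (n+1)]
    have h1 : (0:ℝ) ≤ c0 + (n + 1 : ℕ) := by positivity
    have h2 : c0 + ((n + 1 : ℕ) : ℝ) ≤ c' + (n + 1 : ℕ) := by linarith
    have h4 : 0 < poch c' (n + 1) := poch_pos (lt_of_lt_of_le h0 hle) _
    nlinarith [mul_le_mul_of_nonneg_right ih h1,
      mul_le_mul_of_nonneg_left h2 (mul_pos h0 h4).le]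

lemma aux_bound {a b c' : ℝ} (hle : |a| + |b| + 2 ≤ c') (n : ℕ) :
    |Aux a b c' (n + 1)| ≤ ((|a| + |b| + 2) / c') * Aux |a| |b| (|a| + |b| + 2) (n + 1) := by
  set c0 : ℝ := |a| + |b| + 2 with hc0
  have hc0pos : 0 < c0 := by positivity
  have hc'pos : (0:ℝ) < c' := lt_of_lt_of_le hc0pos hle
  have hPa := poch_abs_le a (n + 1)
  have hPb := poch_abs_le b (n + 1)
  have hPa0 : (0:ℝ) ≤ poch |a| (n + 1) := poch_nonneg (abs_nonneg a) _
  have hPb0 : (0:ℝ) ≤ poch |b| (n + 1) := poch_nonneg (abs_nonneg b) _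
  have hPc' : (0:ℝ) < poch c' (n + 1) := poch_pos hc'pos _
  have hPc0 : (0:ℝ) < poch c0 (n + 1) := poch_pos hc0pos _
  have hmono : c' * poch c0 (n + 1) ≤ c0 * poch c' (n + 1) := poch_mono_mul hc0pos hle n
  have hf : (0:ℝ) < ((n+1).factorial : ℝ) := by positivity
  have main : |poch a (n+1)| * |poch b (n+1)| * (c' * poch c0 (n+1)) ≤
      (poch |a| (n+1) * poch |b| (n+1)) * (c0 * poch c' (n+1)) :=
    mul_le_mul (mul_le_mul hPa hPb (abs_nonneg _) hPa0) hmono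
      (by positivity) (by positivity)
  have e1 : |poch a (n+1) * poch b (n+1) / (poch c' (n+1) * ((n+1).factorial : ℝ))| =
      |poch a (n+1)| * |poch b (n+1)| / (poch c' (n+1) * ((n+1).factorial : ℝ)) := by
    rw [abs_div, abs_mul, abs_of_pos (mul_pos hPc' hf)]
  rw [Aux, Aux, div_div, div_div, e1, div_mul_div_comm,
    div_le_div_iff₀ (by positivity) (by positivity)]
  nlinarith [mul_le_mul_of_nonneg_right main hf.le]

lemma c0_summable (a b : ℝ) : Summable (Aux |a| |b| (|a| + |b| + 2)) :=
  aux_summable (fun i => by positivity) (by linarith [abs_nonneg a, abs_nonneg b])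

lemma tail_bound {a b c' : ℝ} (hc' : ∀ i : ℕ, c' + i ≠ 0) (h' : 0 < c' - a - b)
    (hle : |a| + |b| + 2 ≤ c') :
    |(∑' n, Aux a b c' n) - 1| ≤
      ((|a| + |b| + 2) / c') * ∑' n, Aux |a| |b| (|a| + |b| + 2) (n + 1) := by
  have hs : Summable (Aux a b c') := aux_summable hc' h'
  have h0 : Aux a b c' 0 = 1 := by simp [Aux, poch_zero]
  have hM1 : Summable (fun n => Aux |a| |b| (|a| + |b| + 2) (n + 1)) :=
    (summable_nat_add_iff 1).2 (c0_summable a b)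
  have hs1 : Summable (fun n => Aux a b c' (n + 1)) := (summable_nat_add_iff 1).2 hs
  rw [Summable.tsum_eq_zero_add hs, h0, add_sub_cancel_left]
  calc |∑' n, Aux a b c' (n + 1)| ≤ ∑' n, |Aux a b c' (n + 1)| := by
        simpa using norm_tsum_le_tsum_norm (f := fun n => Aux a b c' (n + 1)) hs1.abs
    _ ≤ ∑' n, ((|a| + |b| + 2) / c') * Aux |a| |b| (|a| + |b| + 2) (n + 1) :=
        Summable.tsum_le_tsum (fun n => aux_bound hle n) hs1.abs (hM1.mul_left _)
    _ = ((|a| + |b| + 2) / c') * ∑' n, Aux |a| |b| (|a| + |b| + 2) (n + 1) := tsum_mul_left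

lemma hc_shift {c : ℝ} (hc : ∀ i : ℕ, c + i ≠ 0) (m : ℕ) : ∀ i : ℕ, (c + m) + i ≠ 0 := by
  intro i
  have := hc (m + i)
  push_cast at this ⊢
  intro hh; exact this (by linarith)

lemma S_tendsto_one {a b c : ℝ} (hc : ∀ i : ℕ, c + i ≠ 0) (h : 0 < c - a - b) :
    Tendsto (fun m : ℕ => ∑' n, Aux a b (c + m) n) atTop (𝓝 1) := by
  set c0 : ℝ := |a| + |b| + 2 with hc0
  set K : ℝ := ∑' n, Aux |a| |b| c0 (n + 1) with hK
  have hzero : Tendsto (fun m : ℕ => (∑' n, Aux a b (c + m) n) - 1) atTop (𝓝 0) := by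
    refine squeeze_zero_norm' (a := fun m : ℕ => c0 * K / (c + m)) ?_ ?_
    · filter_upwards [eventually_ge_atTop ⌈c0 - c⌉₊] with m hm
      have hcm : c0 ≤ c + m := by
        have h1 : (⌈c0 - c⌉₊ : ℝ) ≤ m := by exact_mod_cast hm
        have h2 : c0 - c ≤ ⌈c0 - c⌉₊ := Nat.le_ceil _
        linarith
      have hb := tail_bound (hc_shift hc m) (by linarith : 0 < (c + m) - a - b) hcm
      calc ‖(∑' n, Aux a b (c + m) n) - 1‖ = |(∑' n, Aux a b (c + m) n) - 1| := rfl
        _ ≤ (c0 / (c + m)) * K := hb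
        _ = c0 * K / (c + m) := by ring
    · exact Tendsto.div_atTop tendsto_const_nhds
        (tendsto_atTop_add_const_left _ c tendsto_natCast_atTop_atTop)
  have := hzero.add_const 1
  simpa using this

lemma ratio_eq {a b c : ℝ} (hca : ∀ i : ℕ, (c - a) + i ≠ 0) (hcb : ∀ i : ℕ, (c - b) + i ≠ 0)
    (hc : ∀ i : ℕ, c + i ≠ 0) (hcab : ∀ i : ℕ, (c - a - b) + i ≠ 0) {n : ℕ} (hn : 1 ≤ n) :
    poch (c - a) (n + 1) * poch (c - b) (n + 1) /
        (poch c (n + 1) * poch (c - a - b) (n + 1)) =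
      Real.GammaSeq c n * Real.GammaSeq (c - a - b) n /
        (Real.GammaSeq (c - a) n * Real.GammaSeq (c - b) n) := by
  have hn0 : (0:ℝ) < n := by exact_mod_cast hn
  have hGca := gammaSeq_ne_zero hca hn
  have hGcb := gammaSeq_ne_zero hcb hn
  have hGc := gammaSeq_ne_zero hc hn
  have hGcab := gammaSeq_ne_zero hcab hn
  have hf : (n.factorial : ℝ) ≠ 0 := by positivity
  have hrc : (0:ℝ) < (n:ℝ) ^ c := rpow_pos_of_pos hn0 _
  have hrca : (0:ℝ) < (n:ℝ) ^ (c - a) := rpow_pos_of_pos hn0 _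
  have hrcb : (0:ℝ) < (n:ℝ) ^ (c - b) := rpow_pos_of_pos hn0 _
  have hrcab : (0:ℝ) < (n:ℝ) ^ (c - a - b) := rpow_pos_of_pos hn0 _
  have key : (n:ℝ) ^ (c - a) * (n:ℝ) ^ (c - b) = (n:ℝ) ^ c * (n:ℝ) ^ (c - a - b) := by
    rw [← rpow_add hn0, ← rpow_add hn0]; ring_nf
  rw [poch_eq_gammaSeq hca hn, poch_eq_gammaSeq hcb hn, poch_eq_gammaSeq hc hn,
    poch_eq_gammaSeq hcab hn]
  field_simp
  linear_combination key

theorem gauss_summation (a b c : ℝ) (hc : ∀ n : ℕ, c ≠ -(n : ℝ)) (h : 0 < c - a - b) :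
    twoF1 a b c 1 = Real.Gamma c * Real.Gamma (c - a - b) /
      (Real.Gamma (c - a) * Real.Gamma (c - b)) := by
  have hc' : ∀ i : ℕ, c + i ≠ 0 := fun i hi => hc i (by linarith)
  have hS : twoF1 a b c 1 = ∑' n, Aux a b c n := by
    unfold twoF1 Aux
    exact tsum_congr fun n => by rw [one_pow, mul_one]
  rw [hS]
  have hcab : ∀ i : ℕ, (c - a - b) + i ≠ 0 := fun i =>
    ne_of_gt (by have : (0:ℝ) ≤ i := Nat.cast_nonneg i; linarith)
  by_cases hA : ∃ m : ℕ, c - a = -(m : ℝ)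
  · obtain ⟨m, hm⟩ := hA
    have h1 := iter hc' h (m + 1)
    rw [poch_eq_zero hm (Nat.lt_succ_self m)] at h1
    have h2 : poch c (m + 1) ≠ 0 := poch_ne_zero hc' _
    have h3 : poch (c - a - b) (m + 1) ≠ 0 := (poch_pos h _).ne'
    have h4 : (∑' n, Aux a b c n) = 0 := by
      by_contra hne
      exact (mul_ne_zero (mul_ne_zero h2 h3) hne) (by rw [h1]; ring)
    rw [h4, (Real.Gamma_eq_zero_iff _).2 ⟨m, hm⟩, zero_mul, div_zero]
  by_cases hB : ∃ m : ℕ, c - b = -(m : ℝ)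
  · obtain ⟨m, hm⟩ := hB
    have h1 := iter hc' h (m + 1)
    rw [poch_eq_zero hm (Nat.lt_succ_self m)] at h1
    have h2 : poch c (m + 1) ≠ 0 := poch_ne_zero hc' _
    have h3 : poch (c - a - b) (m + 1) ≠ 0 := (poch_pos h _).ne'
    have h4 : (∑' n, Aux a b c n) = 0 := by
      by_contra hne
      exact (mul_ne_zero (mul_ne_zero h2 h3) hne) (by rw [h1]; ring)
    rw [h4, (Real.Gamma_eq_zero_iff _).2 ⟨m, hm⟩, mul_zero, div_zero]
  · have hca := not_nonpos_int hA
    have hcb := not_nonpos_int hB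
    have hGca : Real.Gamma (c - a) ≠ 0 := by rw [Ne, Real.Gamma_eq_zero_iff]; exact hA
    have hGcb : Real.Gamma (c - b) ≠ 0 := by rw [Ne, Real.Gamma_eq_zero_iff]; exact hB
    have hiter : ∀ m : ℕ, (∑' n, Aux a b c n) =
        poch (c - a) m * poch (c - b) m / (poch c m * poch (c - a - b) m) *
          ∑' n, Aux a b (c + m) n := by
      intro m
      have h1 := iter hc' h m
      have h2 : poch c m ≠ 0 := poch_ne_zero hc' m
      have h3 : poch (c - a - b) m ≠ 0 := (poch_pos h m).ne'
      field_simp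
      linear_combination h1
    have hQ : Tendsto (fun m : ℕ => poch (c - a) m * poch (c - b) m /
        (poch c m * poch (c - a - b) m)) atTop
        (𝓝 (Real.Gamma c * Real.Gamma (c - a - b) /
          (Real.Gamma (c - a) * Real.Gamma (c - b)))) := by
      rw [← tendsto_add_atTop_iff_nat 1]
      have hgs : Tendsto (fun n : ℕ => Real.GammaSeq c n * Real.GammaSeq (c - a - b) n /
          (Real.GammaSeq (c - a) n * Real.GammaSeq (c - b) n)) atTop
          (𝓝 (Real.Gamma c * Real.Gamma (c - a - b) /
            (Real.Gamma (c - a) * Real.Gamma (c - b)))) :=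
        ((Real.GammaSeq_tendsto_Gamma c).mul
          (Real.GammaSeq_tendsto_Gamma (c - a - b))).div
          ((Real.GammaSeq_tendsto_Gamma (c - a)).mul
            (Real.GammaSeq_tendsto_Gamma (c - b))) (mul_ne_zero hGca hGcb)
      refine Tendsto.congr' ?_ hgs
      filter_upwards [eventually_ge_atTop 1] with n hn
      exact (ratio_eq hca hcb hc' hcab hn).symm
    have hlim := hQ.mul (S_tendsto_one hc' h)
    rw [mul_one] at hlim
    exact tendsto_nhds_unique (tendsto_const_nhds.congr hiter) hlim
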